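/- arXiv:hep-th/9704138 — 4 statements merged into one kernel-verified Lean document; each statement's English description precedes it below -/
import Mathlib

section
/- For n ≥ 1 and r variables q₁,…,q_r with elementary symmetric polynomials e₁,…,e_r, the power sum p_n = q₁ⁿ + ⋯ + q_rⁿ satisfies Waring's formula: p_n = n · Σ (-1)^{n + l₁ + ⋯ + l_r} · (l₁ + ⋯ + l_r - 1)!/(l₁!⋯l_r!) · e₁^{l₁}⋯e_r^{l_r}, where the sum is over all tuples (l₁,…,l_r) of nonnegative integers with l₁ + 2l₂ + ⋯ + r·l_r = n. -/
open MvPolynomial Finset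

/-- The monomial in elementary symmetric polynomials `∏ e_{j+1}^{l j}`. -/
noncomputable def wmon (r : ℕ) (l : Fin r → ℕ) : MvPolynomial (Fin r) ℚ :=
  ∏ j : Fin r, esymm (Fin r) ℚ ((j:ℕ)+1) ^ (l j)

/-- The Waring coefficient. -/
def wcoef (r n : ℕ) (l : Fin r → ℕ) : ℚ :=
  (-1)^(n + ∑ j : Fin r, l j) * (((∑ j : Fin r, l j) - 1).factorial : ℚ) /
    ∏ j : Fin r, ((l j).factorial : ℚ)

/-- Tuples of weight `m`. -/
def wset (r m : ℕ) : Finset (Fin r → ℕ) :=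
  (Fintype.piFinset fun _ => Finset.range (m+1)).filter fun l => ∑ j : Fin r, ((j:ℕ)+1) * l j = m

noncomputable def wpoly (r n : ℕ) : MvPolynomial (Fin r) ℚ :=
  ∑ l ∈ wset r n, C (wcoef r n l) * wmon r l

lemma mem_wset {r m : ℕ} {l : Fin r → ℕ} :
    l ∈ wset r m ↔ ∑ j : Fin r, ((j:ℕ)+1) * l j = m := by
  constructor
  · intro h; exact (Finset.mem_filter.1 h).2
  · intro h
    refine Finset.mem_filter.2 ⟨Fintype.mem_piFinset.2 fun j => ?_, h⟩
    rw [Finset.mem_range]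
    have : ((j:ℕ)+1) * l j ≤ m := h ▸ Finset.single_le_sum
      (f := fun j : Fin r => ((j:ℕ)+1) * l j) (fun _ _ => Nat.zero_le _) (Finset.mem_univ j)
    nlinarith

lemma esymm_zero_of_gt {r i : ℕ} (h : r < i) : esymm (Fin r) ℚ i = 0 := by
  rw [esymm, Finset.powersetCard_eq_empty.2 (by simpa using h)]
  simp

lemma sum_apply_update {r : ℕ} {M : Type*} [AddCommMonoid M] (l : Fin r → ℕ) (j : Fin r)
    (v : ℕ) (F : Fin r → ℕ → M) :
    ∑ k : Fin r, F k (Function.update l j v k) = F j v + ∑ k ∈ Finset.univ.erase j, F k (l k) := by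
  rw [← Finset.add_sum_erase _ _ (Finset.mem_univ j)]
  congr 1
  · simp
  · exact Finset.sum_congr rfl fun k hk => by
      rw [Function.update_of_ne (Finset.mem_erase.1 hk).1]

lemma prod_apply_update {r : ℕ} {M : Type*} [CommMonoid M] (l : Fin r → ℕ) (j : Fin r)
    (v : ℕ) (F : Fin r → ℕ → M) :
    ∏ k : Fin r, F k (Function.update l j v k) = F j v * ∏ k ∈ Finset.univ.erase j, F k (l k) := by
  rw [← Finset.mul_prod_erase _ _ (Finset.mem_univ j)]
  congr 1
  · simp
  · exact Finset.prod_congr rfl fun k hk => by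
      rw [Function.update_of_ne (Finset.mem_erase.1 hk).1]

lemma sum_split {r : ℕ} {M : Type*} [AddCommMonoid M] (j : Fin r) (F : Fin r → M) :
    ∑ k : Fin r, F k = F j + ∑ k ∈ Finset.univ.erase j, F k :=
  (Finset.add_sum_erase _ _ (Finset.mem_univ j)).symm

lemma prod_split {r : ℕ} {M : Type*} [CommMonoid M] (j : Fin r) (F : Fin r → M) :
    ∏ k : Fin r, F k = F j * ∏ k ∈ Finset.univ.erase j, F k :=
  (Finset.mul_prod_erase _ _ (Finset.mem_univ j)).symm

-- j+1 < n whenever l j ≠ 0, weight = n, total ≥ 2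
lemma jlt_of_two_le {r n : ℕ} {l : Fin r → ℕ} (hw : ∑ j : Fin r, ((j:ℕ)+1) * l j = n)
    (hm : 2 ≤ ∑ j : Fin r, l j) {j : Fin r} (hj : l j ≠ 0) : (j:ℕ)+1 < n := by
  have h1 := sum_split j (fun k : Fin r => ((k:ℕ)+1) * l k)
  have h2 := sum_split j (fun k : Fin r => l k)
  have h3 : ∑ k ∈ Finset.univ.erase j, l k ≤ ∑ k ∈ Finset.univ.erase j, ((k:ℕ)+1) * l k :=
    Finset.sum_le_sum fun k _ => Nat.le_mul_of_pos_left _ (Nat.succ_pos _)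
  nlinarith [Nat.one_le_iff_ne_zero.2 hj]

lemma alg_helper (s1 s2 s c f P lj D : ℚ) (hP : P ≠ 0) (hlj : lj ≠ 0)
    (hsgn : s1 * s2 = -s) (hD : lj * P = D) :
    s1 * c * (s2 * f / P) = -(s * f / D) * (c * lj) := by
  subst hD
  field_simp
  linear_combination (c * f) * hsgn

lemma scalar_id {r n : ℕ} (l : Fin r → ℕ) (hw : ∑ j : Fin r, ((j:ℕ)+1) * l j = n)
    (hm : 2 ≤ ∑ j : Fin r, l j) :
    (n:ℚ) * wcoef r n l + ∑ j ∈ Finset.univ.filter (fun j : Fin r => l j ≠ 0),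
      (-1:ℚ)^((j:ℕ)+1) * ((n-((j:ℕ)+1) : ℕ):ℚ) *
        wcoef r (n-((j:ℕ)+1)) (Function.update l j (l j - 1)) = 0 := by
  set m := ∑ j : Fin r, l j with hm_def
  set D := ∏ j : Fin r, ((l j).factorial : ℚ) with hD_def
  have hD : D ≠ 0 := Finset.prod_ne_zero_iff.2 fun j _ => by
    exact_mod_cast (l j).factorial_ne_zero
  -- transform each summand
  have hterm : ∀ j ∈ Finset.univ.filter (fun j : Fin r => l j ≠ 0),
      (-1:ℚ)^((j:ℕ)+1) * ((n-((j:ℕ)+1) : ℕ):ℚ) *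
        wcoef r (n-((j:ℕ)+1)) (Function.update l j (l j - 1))
      = -((-1:ℚ)^(n+m) * ((m-2).factorial : ℚ) / D) * (((n:ℚ) - ((j:ℕ)+1)) * (l j : ℚ)) := by
    intro j hj
    have hj0 : l j ≠ 0 := (Finset.mem_filter.1 hj).2
    have hjlt : (j:ℕ)+1 < n := jlt_of_two_le hw hm hj0
    obtain ⟨x, hx⟩ : ∃ x, l j = x + 1 := ⟨l j - 1, by omega⟩
    have hupd : Function.update l j (l j - 1) = Function.update l j x := by
      rw [hx, Nat.add_sub_cancel]
    have h1 : ∑ k : Fin r, Function.update l j x k = m - 1 := by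
      rw [sum_apply_update l j x (fun _ v => v)]
      rw [hm_def, sum_split j (fun k : Fin r => l k)]
      omega
    have h3 : ((l j):ℚ) * ∏ k : Fin r, ((Function.update l j x k).factorial : ℚ) = D := by
      rw [prod_apply_update l j x (fun _ v => ((v.factorial : ℕ) : ℚ)),
        hD_def, prod_split j (fun k : Fin r => ((l k).factorial : ℚ)), hx, Nat.factorial_succ]
      push_cast
      ring
    have hP : (∏ k : Fin r, ((Function.update l j x k).factorial : ℚ)) ≠ 0 :=
      Finset.prod_ne_zero_iff.2 fun k _ => by exact_mod_cast (Function.update l j x k).factorial_ne_zero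
    have hm1 : m - 1 - 1 = m - 2 := by omega
    have hcast : ((n-((j:ℕ)+1) : ℕ):ℚ) = (n:ℚ) - ((j:ℕ)+1) := by
      push_cast [Nat.cast_sub hjlt.le]
      ring
    have hljq : ((l j):ℚ) ≠ 0 := by exact_mod_cast hj0
    have hsgn' : (-1:ℚ)^((j:ℕ)+1) * (-1:ℚ)^((n-((j:ℕ)+1)) + (m-1))
        = -(-1:ℚ)^(n+m) := by
      have h5 : (-1:ℚ)^(n+m)
          = (-1:ℚ)^(((j:ℕ)+1) + ((n-((j:ℕ)+1)) + (m-1))) * (-1) := by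
        have hA : ((j:ℕ)+1) + ((n-((j:ℕ)+1)) + (m-1)) + 1 = n + m := by omega
        rw [← hA, pow_succ]
      rw [h5, ← pow_add]
      ring
    rw [hupd, wcoef, h1, hm1, hcast]
    exact alg_helper _ _ _ _ _ _ _ _ hP hljq hsgn' h3
  rw [Finset.sum_congr rfl hterm,
    Finset.sum_filter_of_ne (fun j _ hne => by
      intro h0
      apply hne
      rw [h0]
      simp)]
  simp only [← Finset.mul_sum]
  have hcw : ∑ j : Fin r, (((j:ℕ):ℚ)+1) * (l j : ℚ) = (n:ℚ) := by exact_mod_cast hw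
  have hcm : ∑ j : Fin r, ((l j : ℕ):ℚ) = (m:ℚ) := by exact_mod_cast hm_def.symm
  have hsum : ∑ j : Fin r, (((n:ℚ) - ((j:ℕ)+1)) * (l j : ℚ)) = (n:ℚ)*(m:ℚ) - n := by
    have : ∀ j : Fin r, ((n:ℚ) - ((j:ℕ)+1)) * (l j : ℚ)
        = (n:ℚ) * (l j:ℚ) - (((j:ℕ):ℚ)+1) * (l j:ℚ) := fun j => by ring
    rw [Finset.sum_congr rfl fun j _ => this j, Finset.sum_sub_distrib, ← Finset.mul_sum,
      hcw, hcm]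
  rw [hsum, wcoef, ← hm_def, ← hD_def]
  have hfac : ((m-1).factorial : ℚ) = ((m:ℚ) - 1) * ((m-2).factorial : ℚ) := by
    have h6 : m - 1 = (m-2) + 1 := by omega
    rw [h6, Nat.factorial_succ]
    push_cast
    have : ((m - 2 : ℕ) : ℚ) = (m:ℚ) - 2 := by
      push_cast [Nat.cast_sub hm]
      ring
    rw [this]
    ring
  rw [hfac]
  field_simp
  ring


namespace Waring

variable {r n : ℕ}

abbrev A (r : ℕ) := MvPolynomial (Fin r) ℚ

/-- the per-pair term after reindexing -/
noncomputable def G (r n : ℕ) (l : Fin r → ℕ) (j : Fin r) : MvPolynomial (Fin r) ℚ :=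
  C ((-1:ℚ)^((j:ℕ)+1) * ((n-((j:ℕ)+1) : ℕ):ℚ) *
      wcoef r (n-((j:ℕ)+1)) (Function.update l j (l j - 1))) * wmon r l

lemma weight_update_add (l : Fin r → ℕ) (j : Fin r) :
    ∑ k : Fin r, ((k:ℕ)+1) * (Function.update l j (l j + 1) k)
      = (∑ k : Fin r, ((k:ℕ)+1) * l k) + ((j:ℕ)+1) := by
  rw [sum_apply_update l j (l j + 1) (fun k v => ((k:ℕ)+1) * v),
    sum_split j (fun k : Fin r => ((k:ℕ)+1) * l k), Nat.mul_succ]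
  omega

lemma weight_update_sub (l : Fin r → ℕ) (j : Fin r) (h : l j ≠ 0) :
    ∑ k : Fin r, ((k:ℕ)+1) * (Function.update l j (l j - 1) k)
      = (∑ k : Fin r, ((k:ℕ)+1) * l k) - ((j:ℕ)+1) := by
  obtain ⟨x, hx⟩ : ∃ x, l j = x + 1 := ⟨l j - 1, by omega⟩
  rw [sum_apply_update l j (l j - 1) (fun k v => ((k:ℕ)+1) * v),
    sum_split j (fun k : Fin r => ((k:ℕ)+1) * l k), hx, Nat.mul_succ]
  simp only [Nat.add_sub_cancel]
  omega

/-- bracket vanishing for `m ≥ 2` -/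
lemma bracket_eq_zero (l : Fin r → ℕ) (hw : ∑ j : Fin r, ((j:ℕ)+1) * l j = n)
    (hm : 2 ≤ ∑ j : Fin r, l j) :
    (n : MvPolynomial (Fin r) ℚ) * (C (wcoef r n l) * wmon r l) +
      ∑ j ∈ Finset.univ.filter (fun j : Fin r => l j ≠ 0 ∧ (j:ℕ)+1 ≠ n), G r n l j = 0 := by
  have hfe : Finset.univ.filter (fun j : Fin r => l j ≠ 0 ∧ (j:ℕ)+1 ≠ n)
      = Finset.univ.filter (fun j : Fin r => l j ≠ 0) := by
    apply Finset.filter_congr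
    intro j _
    constructor
    · exact fun h => h.1
    · exact fun h => ⟨h, Nat.ne_of_lt (jlt_of_two_le hw hm h)⟩
  rw [hfe]
  simp only [G]
  rw [← Finset.sum_mul, ← map_sum]
  have hn' : (n : MvPolynomial (Fin r) ℚ) = C ((n:ℚ)) := by simp
  rw [hn', ← mul_assoc, ← map_mul, ← add_mul, ← map_add, scalar_id l hw hm, map_zero, zero_mul]

lemma G_update (j : Fin r) (l' : Fin r → ℕ) :
    G r n (Function.update l' j (l' j + 1)) j
      = (-1 : MvPolynomial (Fin r) ℚ)^((j:ℕ)+1) * esymm (Fin r) ℚ ((j:ℕ)+1) *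
        (((n-((j:ℕ)+1) : ℕ) : MvPolynomial (Fin r) ℚ) *
          (C (wcoef r (n-((j:ℕ)+1)) l') * wmon r l')) := by
  unfold G
  have h1 : Function.update (Function.update l' j (l' j + 1)) j
      ((Function.update l' j (l' j + 1)) j - 1) = l' := by
    rw [Function.update_self, Nat.add_sub_cancel, Function.update_idem, Function.update_eq_self]
  rw [h1]
  have h2 : wmon r (Function.update l' j (l' j + 1))
      = esymm (Fin r) ℚ ((j:ℕ)+1) * wmon r l' := by
    rw [wmon, prod_apply_update l' j (l' j + 1) (fun k v => esymm (Fin r) ℚ ((k:ℕ)+1) ^ v),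
      wmon, prod_split j (fun k : Fin r => esymm (Fin r) ℚ ((k:ℕ)+1) ^ l' k), pow_succ]
    ring
  rw [h2]
  simp only [map_mul, map_pow, map_neg, map_one, map_natCast]
  ring

lemma S_eq (hn : 1 ≤ n) :
    ∑ j ∈ Finset.univ.filter (fun j : Fin r => (j:ℕ)+1 < n),
      (-1 : MvPolynomial (Fin r) ℚ)^((j:ℕ)+1) * esymm (Fin r) ℚ ((j:ℕ)+1) *
        (((n-((j:ℕ)+1) : ℕ) : MvPolynomial (Fin r) ℚ) * wpoly r (n-((j:ℕ)+1)))
    = ∑ l ∈ wset r n, ∑ j ∈ Finset.univ.filter (fun j : Fin r => l j ≠ 0 ∧ (j:ℕ)+1 ≠ n),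
        G r n l j := by
  simp only [wpoly, Finset.mul_sum]
  rw [Finset.sum_sigma', Finset.sum_sigma']
  refine Finset.sum_bij' (fun p _ => (⟨Function.update p.2 p.1 (p.2 p.1 + 1), p.1⟩ :
      Σ _ : Fin r → ℕ, Fin r)) (fun p _ => (⟨p.2, Function.update p.1 p.2 (p.1 p.2 - 1)⟩ :
      Σ _ : Fin r, Fin r → ℕ)) ?_ ?_ ?_ ?_ ?_
  · rintro ⟨j, l'⟩ hp
    rw [Finset.mem_sigma] at hp ⊢
    dsimp only at hp ⊢
    obtain ⟨hj, hl'⟩ := hp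
    rw [Finset.mem_filter] at hj
    have hjlt : (j:ℕ)+1 < n := hj.2
    have hwl' := mem_wset.1 hl'
    constructor
    · rw [mem_wset, weight_update_add, hwl']
      omega
    · rw [Finset.mem_filter]
      refine ⟨Finset.mem_univ _, ?_, by omega⟩
      rw [Function.update_self]
      omega
  · rintro ⟨l, j⟩ hp
    rw [Finset.mem_sigma] at hp ⊢
    dsimp only at hp ⊢
    obtain ⟨hl, hj⟩ := hp
    rw [Finset.mem_filter] at hj
    obtain ⟨-, hj0, hjn⟩ := hj
    have hwl := mem_wset.1 hl
    have hle : (j:ℕ)+1 ≤ n := by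
      calc (j:ℕ)+1 ≤ ((j:ℕ)+1) * l j :=
        Nat.le_mul_of_pos_right ((j:ℕ)+1) (Nat.pos_of_ne_zero hj0)
      _ ≤ ∑ k : Fin r, ((k:ℕ)+1) * l k := Finset.single_le_sum
          (f := fun k : Fin r => ((k:ℕ)+1) * l k) (fun _ _ => Nat.zero_le _) (Finset.mem_univ j)
      _ = n := hwl
    constructor
    · rw [Finset.mem_filter]
      refine ⟨Finset.mem_univ _, ?_⟩
      show (j:ℕ)+1 < n
      omega
    · rw [mem_wset, weight_update_sub l j hj0, hwl]
  · rintro ⟨j, l'⟩ hp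
    dsimp only
    simp only [Function.update_self, Nat.add_sub_cancel, Function.update_idem,
      Function.update_eq_self]
  · rintro ⟨l, j⟩ hp
    rw [Finset.mem_sigma, Finset.mem_filter] at hp
    have hj0 : l j ≠ 0 := hp.2.2.1
    dsimp only
    simp only [Function.update_self, Function.update_idem]
    congr
    rw [Nat.sub_add_cancel (Nat.pos_of_ne_zero hj0), Function.update_eq_self]
  · rintro ⟨j, l'⟩ hp
    exact (G_update j l').symm

lemma keyD (hn : 1 ≤ n) :
    (n : MvPolynomial (Fin r) ℚ) * wpoly r n +
      ∑ j ∈ Finset.univ.filter (fun j : Fin r => (j:ℕ)+1 < n),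
        (-1 : MvPolynomial (Fin r) ℚ)^((j:ℕ)+1) * esymm (Fin r) ℚ ((j:ℕ)+1) *
          (((n-((j:ℕ)+1) : ℕ) : MvPolynomial (Fin r) ℚ) * wpoly r (n-((j:ℕ)+1)))
    = (-1 : MvPolynomial (Fin r) ℚ)^(n+1) * (n : MvPolynomial (Fin r) ℚ) *
        esymm (Fin r) ℚ n := by
  rw [S_eq hn, wpoly, Finset.mul_sum, ← Finset.sum_add_distrib]
  rw [← Finset.sum_filter_of_ne (p := fun l : Fin r → ℕ => ∑ k : Fin r, l k = 1)
    (fun l hl hne => ?_)]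
  swap
  · by_contra h1
    have hw := mem_wset.1 hl
    have hm0 : ∑ k : Fin r, l k ≠ 0 := by
      intro h0
      rw [Finset.sum_eq_zero (fun k _ => by
        rw [Finset.sum_eq_zero_iff.1 h0 k (Finset.mem_univ k), Nat.mul_zero])] at hw
      omega
    exact hne (bracket_eq_zero l hw (by omega))
  by_cases hnr : n ≤ r
  · set j₀ : Fin r := ⟨n-1, by omega⟩ with hj₀
    set l₀ : Fin r → ℕ := fun k => if k = j₀ then 1 else 0 with hl₀
    have hj₀n : (j₀ : ℕ) + 1 = n := by simp [hj₀]; omega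
    have hs1 : ∑ k : Fin r, l₀ k = 1 := by
      rw [hl₀]
      simp
    have hwt : ∑ k : Fin r, ((k:ℕ)+1) * l₀ k = n := by
      rw [hl₀]
      simp only [mul_ite, mul_one, mul_zero]
      rw [Finset.sum_ite_eq' Finset.univ j₀ (fun k : Fin r => (k:ℕ)+1)]
      simp [hj₀n]
    have hset : (wset r n).filter (fun l => ∑ k : Fin r, l k = 1) = {l₀} := by
      ext l
      simp only [Finset.mem_filter, Finset.mem_singleton]
      constructor
      · rintro ⟨hl, hm1⟩
        have hw := mem_wset.1 hl
        obtain ⟨j, -, hj⟩ := Finset.exists_ne_zero_of_sum_ne_zero (by omega :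
          ∑ k : Fin r, l k ≠ 0)
        have hlj : l j = 1 := by
          have h5 : l j ≤ ∑ k : Fin r, l k :=
            Finset.single_le_sum (fun _ _ => Nat.zero_le _) (Finset.mem_univ j)
          omega
        have hrest : ∀ k ∈ Finset.univ.erase j, l k = 0 := by
          have hsp := sum_split j (fun k : Fin r => l k)
          rw [hm1, hlj] at hsp
          exact fun k hk => Finset.sum_eq_zero_iff.1 (by omega) k hk
        have hwj : (j:ℕ)+1 = n := by
          have hsp := sum_split j (fun k : Fin r => ((k:ℕ)+1) * l k)
          rw [hw] at hsp
          rw [Finset.sum_eq_zero (fun k hk => by rw [hrest k hk, Nat.mul_zero])] at hsp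
          rw [hlj] at hsp
          omega
        have hjj : j = j₀ := by
          apply Fin.ext
          simp [hj₀]
          omega
        funext k
        simp only [hl₀]
        by_cases hk : k = j₀
        · rw [hk, if_pos rfl, ← hjj, hlj]
        · rw [if_neg hk]
          exact hrest k (Finset.mem_erase.2 ⟨by rw [← hjj] at hk; exact hk, Finset.mem_univ k⟩)
      · rintro rfl
        exact ⟨mem_wset.2 hwt, hs1⟩
    rw [hset, Finset.sum_singleton]
    have hfilt : Finset.univ.filter (fun j : Fin r => l₀ j ≠ 0 ∧ (j:ℕ)+1 ≠ n) = ∅ := by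
      ext j
      simp only [Finset.mem_filter, Finset.mem_univ, true_and, Finset.notMem_empty, iff_false,
        not_and]
      intro hne
      have : j = j₀ := by
        by_contra hc
        exact hne (by rw [hl₀]; simp [hc])
      rw [this, hj₀n]
      simp
    rw [hfilt, Finset.sum_empty, add_zero]
    have hwcoef : wcoef r n l₀ = (-1:ℚ)^(n+1) := by
      rw [wcoef, hs1]
      have : ∏ k : Fin r, ((l₀ k).factorial : ℚ) = 1 := by
        apply Finset.prod_eq_one
        intro k _
        rw [hl₀]
        by_cases hk : k = j₀ <;> simp [hk]
      rw [this]
      simp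
    have hwmon : wmon r l₀ = esymm (Fin r) ℚ n := by
      rw [wmon]
      rw [Finset.prod_eq_single j₀ (fun k _ hk => by rw [hl₀]; simp [hk])
        (fun h => absurd (Finset.mem_univ j₀) h)]
      rw [hl₀]
      simp [hj₀n]
    rw [hwcoef, hwmon]
    simp only [map_pow, map_neg, map_one]
    ring
  · have hset : (wset r n).filter (fun l => ∑ k : Fin r, l k = 1) = ∅ := by
      ext l
      simp only [Finset.mem_filter, Finset.notMem_empty, iff_false, not_and]
      intro hl hm1
      have hw := mem_wset.1 hl
      have : ∑ k : Fin r, ((k:ℕ)+1) * l k ≤ ∑ k : Fin r, r * l k :=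
        Finset.sum_le_sum fun k _ => Nat.mul_le_mul_right _ (by omega)
      rw [hw, ← Finset.mul_sum, hm1, Nat.mul_one] at this
      omega
    rw [hset, Finset.sum_empty, esymm_zero_of_gt (by omega : r < n)]
    ring

lemma antidiag_reindex {M : Type*} [AddCommMonoid M] (n : ℕ) (f : ℕ → ℕ → M) :
    ∑ a ∈ (Finset.HasAntidiagonal.antidiagonal n).filter (fun a => a.1 ∈ Set.Ioo 0 n), f a.1 a.2
      = ∑ i ∈ Finset.Ioo 0 n, f i (n - i) := by
  refine Finset.sum_nbij' (fun a => a.1) (fun i => (i, n - i)) ?_ ?_ ?_ ?_ ?_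
  · rintro ⟨a1, a2⟩ ha
    rw [Finset.mem_filter, Finset.HasAntidiagonal.mem_antidiagonal] at ha
    obtain ⟨h1, h2⟩ := ha
    simp only [Set.mem_Ioo] at h2
    rw [Finset.mem_Ioo]
    exact ⟨h2.1, h2.2⟩
  · intro i hi
    rw [Finset.mem_Ioo] at hi
    rw [Finset.mem_filter, Finset.HasAntidiagonal.mem_antidiagonal]
    constructor
    · omega
    · simp only [Set.mem_Ioo]
      exact hi
  · rintro ⟨a1, a2⟩ ha
    rw [Finset.mem_filter, Finset.HasAntidiagonal.mem_antidiagonal] at ha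
    have h3 : n - a1 = a2 := by omega
    dsimp only
    rw [h3]
  · intro i hi
    dsimp only
  · rintro ⟨a1, a2⟩ ha
    rw [Finset.mem_filter, Finset.HasAntidiagonal.mem_antidiagonal] at ha
    dsimp only
    have h3 : a2 = n - a1 := by omega
    rw [h3]

theorem psum_eq (r : ℕ) : ∀ n, 1 ≤ n →
    psum (Fin r) ℚ n = (n : MvPolynomial (Fin r) ℚ) * wpoly r n := by
  intro n
  induction n using Nat.strong_induction_on with
  | _ n ih =>
    intro hn
    rw [psum_eq_mul_esymm_sub_sum (Fin r) ℚ n hn]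
    rw [antidiag_reindex n (fun i k => (-1 : MvPolynomial (Fin r) ℚ)^i * esymm (Fin r) ℚ i *
      psum (Fin r) ℚ k)]
    have hsub : ∑ i ∈ Finset.Ioo 0 n, (-1 : MvPolynomial (Fin r) ℚ)^i * esymm (Fin r) ℚ i *
          psum (Fin r) ℚ (n - i)
        = ∑ i ∈ Finset.Ioo 0 n, (-1 : MvPolynomial (Fin r) ℚ)^i * esymm (Fin r) ℚ i *
          (((n - i : ℕ) : MvPolynomial (Fin r) ℚ) * wpoly r (n - i)) := by
      refine Finset.sum_congr rfl fun i hi => ?_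
      rw [Finset.mem_Ioo] at hi
      rw [ih (n - i) (by omega) (by omega)]
    rw [hsub]
    have hfil : ∑ i ∈ (Finset.Ioo 0 n).filter (fun i => i ≤ r),
          (-1 : MvPolynomial (Fin r) ℚ)^i * esymm (Fin r) ℚ i *
            (((n - i : ℕ) : MvPolynomial (Fin r) ℚ) * wpoly r (n - i))
        = ∑ i ∈ Finset.Ioo 0 n, (-1 : MvPolynomial (Fin r) ℚ)^i * esymm (Fin r) ℚ i *
            (((n - i : ℕ) : MvPolynomial (Fin r) ℚ) * wpoly r (n - i)) := by
      refine Finset.sum_filter_of_ne fun i _ hne => ?_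
      by_contra hc
      exact hne (by rw [esymm_zero_of_gt (by omega : r < i)]; ring)
    rw [← hfil]
    have hreix : ∑ i ∈ (Finset.Ioo 0 n).filter (fun i => i ≤ r),
        (-1 : MvPolynomial (Fin r) ℚ)^i * esymm (Fin r) ℚ i *
          (((n - i : ℕ) : MvPolynomial (Fin r) ℚ) * wpoly r (n - i))
      = ∑ j ∈ Finset.univ.filter (fun j : Fin r => (j:ℕ)+1 < n),
        (-1 : MvPolynomial (Fin r) ℚ)^((j:ℕ)+1) * esymm (Fin r) ℚ ((j:ℕ)+1) *
          (((n-((j:ℕ)+1) : ℕ) : MvPolynomial (Fin r) ℚ) * wpoly r (n-((j:ℕ)+1))) := by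
      refine Finset.sum_bij' (fun i hi => (⟨i - 1, ?_⟩ : Fin r))
        (fun j _ => (j:ℕ)+1) ?_ ?_ ?_ ?_ ?_
      · rw [Finset.mem_filter, Finset.mem_Ioo] at hi
        omega
      · intro i hi
        rw [Finset.mem_filter, Finset.mem_Ioo] at hi
        rw [Finset.mem_filter]
        refine ⟨Finset.mem_univ _, ?_⟩
        show (i - 1) + 1 < n
        omega
      · intro j hj
        rw [Finset.mem_filter] at hj
        rw [Finset.mem_filter, Finset.mem_Ioo]
        have h6 := j.isLt
        refine ⟨⟨by omega, by omega⟩, by omega⟩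
      · intro i hi
        rw [Finset.mem_filter, Finset.mem_Ioo] at hi
        dsimp only
        omega
      · intro j hj
        rw [Finset.mem_filter] at hj
        apply Fin.ext
        dsimp only
        omega
      · intro i hi
        rw [Finset.mem_filter, Finset.mem_Ioo] at hi
        have h7 : ((⟨i - 1, by omega⟩ : Fin r) : ℕ) + 1 = i := by
          dsimp only
          omega
        rw [h7]
    rw [hreix, ← keyD hn]
    ring

end Waring

/-- **Waring's formula**: for `n ≥ 1`, the power sum `p_n = q₁ⁿ + ⋯ + q_rⁿ` in the
polynomial ring `ℚ[q₁,…,q_r]` equals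
`n · Σ (-1)^{n + l₁+⋯+l_r} (l₁+⋯+l_r - 1)!/(l₁!⋯l_r!) e₁^{l₁} ⋯ e_r^{l_r}`,
summed over all tuples of nonnegative integers with `l₁ + 2l₂ + ⋯ + r·l_r = n`
(each such `l_j` necessarily satisfies `l_j ≤ n`, so we may sum over `Fin r → Fin (n+1)`). -/
theorem waring_formula (r n : ℕ) (hn : 1 ≤ n) :
    psum (Fin r) ℚ n =
      (n : MvPolynomial (Fin r) ℚ) *
        ∑ l ∈ Finset.univ.filter
            (fun l : Fin r → Fin (n + 1) => ∑ j : Fin r, ((j : ℕ) + 1) * (l j : ℕ) = n),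
          C ((-1 : ℚ) ^ (n + ∑ j : Fin r, (l j : ℕ)) *
              (Nat.factorial (∑ j : Fin r, (l j : ℕ) - 1) : ℚ) / ∏ j : Fin r, (Nat.factorial (l j) : ℚ)) *
            ∏ j : Fin r, esymm (Fin r) ℚ ((j : ℕ) + 1) ^ (l j : ℕ) := by
  rw [Waring.psum_eq r n hn]
  congr 1
  rw [wpoly]
  refine Finset.sum_nbij' (fun l (j : Fin r) => (⟨l j % (n+1), Nat.mod_lt _ (by omega)⟩ : Fin (n+1)))
    (fun l (j : Fin r) => (l j : ℕ)) ?_ ?_ ?_ ?_ ?_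
  · intro l hl
    have hw := mem_wset.1 hl
    have hle : ∀ j : Fin r, l j ≤ n := fun j => by
      have h1 : ((j:ℕ)+1) * l j ≤ n := hw ▸ Finset.single_le_sum
        (f := fun k : Fin r => ((k:ℕ)+1) * l k) (fun _ _ => Nat.zero_le _) (Finset.mem_univ j)
      nlinarith
    rw [Finset.mem_filter]
    refine ⟨Finset.mem_univ _, ?_⟩
    show ∑ j : Fin r, ((j:ℕ)+1) * (l j % (n+1)) = n
    calc ∑ j : Fin r, ((j:ℕ)+1) * (l j % (n+1)) = ∑ j : Fin r, ((j:ℕ)+1) * l j := by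
          refine Finset.sum_congr rfl fun j _ => ?_
          rw [Nat.mod_eq_of_lt (by have := hle j; omega)]
      _ = n := hw
  · intro l hl
    rw [Finset.mem_filter] at hl
    exact mem_wset.2 hl.2
  · intro l hl
    have hw := mem_wset.1 hl
    have hle : ∀ j : Fin r, l j ≤ n := fun j => by
      have h1 : ((j:ℕ)+1) * l j ≤ n := hw ▸ Finset.single_le_sum
        (f := fun k : Fin r => ((k:ℕ)+1) * l k) (fun _ _ => Nat.zero_le _) (Finset.mem_univ j)
      nlinarith
    funext j
    show (l j) % (n+1) = l j
    exact Nat.mod_eq_of_lt (by have := hle j; omega)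
  · intro l hl
    funext j
    apply Fin.ext
    show (l j : ℕ) % (n+1) = (l j : ℕ)
    exact Nat.mod_eq_of_lt (l j).isLt
  · intro l hl
    have hw := mem_wset.1 hl
    have hle : ∀ j : Fin r, l j ≤ n := fun j => by
      have h1 : ((j:ℕ)+1) * l j ≤ n := hw ▸ Finset.single_le_sum
        (f := fun k : Fin r => ((k:ℕ)+1) * l k) (fun _ _ => Nat.zero_le _) (Finset.mem_univ j)
      nlinarith
    have hmod' : ∀ j : Fin r, l j % (n+1) = l j :=
      fun j => Nat.mod_eq_of_lt (by have := hle j; omega)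
    rw [wcoef, wmon]
    simp only [hmod']
end

section
/- Define W_{n+1}(x₁,…,x_r) as the polynomial given by Waring's formula so that W_{n+1}(e₁,…,e_r) = (1/(n+1))·Σᵢ qᵢ^{n+1}. Then the partial derivative ∂W_{n+1}/∂x_i evaluated at (e₁,…,e_r) equals (-1)^n y_{n+1-i}, where y_j = (-1)^j h_j is the j-th complete homogeneous symmetric polynomial up to sign, for 1 ≤ i ≤ r. -/
open MvPolynomial
open Finset

namespace PderivAux

set_option linter.unusedSectionVars false

variable {σ : Type*} [Fintype σ] [DecidableEq σ]

/-- Elementary symmetric polynomial in the variables of `s`. -/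
noncomputable def EE (s : Finset σ) (j : ℕ) : MvPolynomial σ ℚ :=
  ∑ T ∈ s.powersetCard j, ∏ i ∈ T, X i

/-- Complete homogeneous symmetric polynomial in the variables of `s`. -/
noncomputable def HH (s : Finset σ) (j : ℕ) : MvPolynomial σ ℚ :=
  ∑ m ∈ s.sym j, (m.1.map X).prod

@[simp] lemma EE_zero (s : Finset σ) : EE s 0 = 1 := by simp [EE]

lemma EE_eq_zero {s : Finset σ} {j : ℕ} (h : s.card < j) : EE s j = 0 := by
  rw [EE, powersetCard_eq_empty.2 h, sum_empty]

@[simp] lemma HH_zero (s : Finset σ) : HH s 0 = 1 := by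
  rw [HH, sym_zero, sum_singleton]; rfl

lemma HH_empty (m : ℕ) : HH (∅ : Finset σ) (m + 1) = 0 := by simp [HH]

lemma EE_insert {a : σ} {s : Finset σ} (ha : a ∉ s) (j : ℕ) :
    EE (insert a s) (j + 1) = EE s (j + 1) + X a * EE s j := by
  rw [EE, powersetCard_succ_insert ha, sum_union, EE, EE, mul_sum]
  · congr 1
    rw [sum_image]
    · exact Finset.sum_congr rfl fun T hT => by
        rw [prod_insert fun haT => ha ((mem_powersetCard.1 hT).1 haT)]
    · intro x hx y hy hxy
      have hxa : a ∉ x := fun h => ha ((mem_powersetCard.1 hx).1 h)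
      have hya : a ∉ y := fun h => ha ((mem_powersetCard.1 hy).1 h)
      rw [← Finset.erase_insert hxa, ← Finset.erase_insert hya, hxy]
  · rw [Finset.disjoint_right]
    intro T hT hT'
    rw [mem_image] at hT
    obtain ⟨T', hT', rfl⟩ := hT
    exact ha ((mem_powersetCard.1 hT').1 (mem_insert_self a T'))

lemma HH_insert {a : σ} {s : Finset σ} (ha : a ∉ s) (m : ℕ) :
    HH (insert a s) (m + 1) = HH s (m + 1) + X a * HH (insert a s) m := by
  classical
  rw [HH, ← Finset.sum_filter_add_sum_filter_not ((insert a s).sym (m+1)) (fun A => a ∈ A)]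
  rw [add_comm]
  congr 1
  · -- multisets avoiding `a`
    rw [HH]
    apply Finset.sum_congr
    · ext A
      simp only [mem_filter, mem_sym_iff, mem_insert]
      constructor
      · rintro ⟨h1, h2⟩ b hb
        rcases h1 b hb with rfl | h
        · exact absurd hb h2
        · exact h
      · intro h
        exact ⟨fun b hb => Or.inr (h b hb), fun hA => ha (h a hA)⟩
    · intro A _; rfl
  · -- multisets containing `a`
    rw [HH, mul_sum]
    apply Finset.sum_nbij' (i := fun A => if h : a ∈ A then A.erase a h else Sym.replicate m a)
      (j := fun B => a ::ₛ B)
    · intro A hA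
      rw [mem_filter] at hA
      rw [dif_pos hA.2]
      rw [mem_sym_iff]
      intro b hb
      exact mem_sym_iff.1 hA.1 b (Multiset.mem_of_mem_erase (by have hb' : b ∈ (A.erase a hA.2 : Multiset σ) := hb; rwa [Sym.coe_erase] at hb'))
    · intro B hB
      rw [mem_filter]
      refine ⟨mem_sym_iff.2 fun b hb => ?_, Sym.mem_cons_self a B⟩
      rcases Sym.mem_cons.1 hb with rfl | h
      · exact mem_insert_self b s
      · exact mem_sym_iff.1 hB b h
    · intro A hA
      rw [mem_filter] at hA
      rw [dif_pos hA.2]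
      exact Sym.cons_erase hA.2
    · intro B hB
      rw [dif_pos (Sym.mem_cons_self a B)]
      apply Sym.coe_injective
      rw [Sym.coe_erase, Sym.coe_cons, Multiset.erase_cons_head]
    · intro A hA
      rw [mem_filter] at hA
      rw [dif_pos hA.2]
      have hco := congrArg Sym.toMultiset (Sym.cons_erase hA.2).symm
      rw [Sym.coe_cons] at hco
      rw [show (A.1 : Multiset σ) = Sym.toMultiset A from rfl, hco, Multiset.map_cons,
        Multiset.prod_cons]
      rfl

/-- The alternating sum `∑ (-1)^p e_p h_q` over the antidiagonal. -/
noncomputable def FF (s : Finset σ) (m : ℕ) : MvPolynomial σ ℚ :=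
  ∑ p ∈ Finset.HasAntidiagonal.antidiagonal m, (-1) ^ p.1 * (EE s p.1 * HH s p.2)

noncomputable def GG (a : σ) (s : Finset σ) (m : ℕ) : MvPolynomial σ ℚ :=
  ∑ p ∈ Finset.HasAntidiagonal.antidiagonal m, (-1) ^ p.1 * (EE s p.1 * HH (insert a s) p.2)

lemma GG_succ {a : σ} {s : Finset σ} (ha : a ∉ s) (m : ℕ) :
    GG a s (m + 1) = FF s (m + 1) + X a * GG a s m := by
  rw [GG, Finset.Nat.sum_antidiagonal_succ', FF, Finset.Nat.sum_antidiagonal_succ', GG, mul_sum]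
  have : ∀ p ∈ Finset.HasAntidiagonal.antidiagonal m,
      (-1:MvPolynomial σ ℚ) ^ p.1 * (EE s p.1 * HH (insert a s) (p.2 + 1)) =
      (-1) ^ p.1 * (EE s p.1 * HH s (p.2 + 1)) +
        X a * ((-1) ^ p.1 * (EE s p.1 * HH (insert a s) p.2)) := by
    intro p _
    rw [HH_insert ha]
    ring
  rw [Finset.sum_congr rfl this, Finset.sum_add_distrib]
  simp only [HH_zero]
  ring

lemma FF_insert_succ {a : σ} {s : Finset σ} (ha : a ∉ s) (m : ℕ) :
    FF (insert a s) (m + 1) = GG a s (m + 1) - X a * GG a s m := by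
  rw [FF, Finset.Nat.sum_antidiagonal_succ, GG, Finset.Nat.sum_antidiagonal_succ, GG, mul_sum]
  have : ∀ p ∈ Finset.HasAntidiagonal.antidiagonal m,
      (-1:MvPolynomial σ ℚ) ^ (p.1 + 1) * (EE (insert a s) (p.1 + 1) * HH (insert a s) p.2) =
      (-1) ^ (p.1 + 1) * (EE s (p.1 + 1) * HH (insert a s) p.2) -
        X a * ((-1) ^ p.1 * (EE s p.1 * HH (insert a s) p.2)) := by
    intro p _
    rw [EE_insert ha]
    ring
  rw [Finset.sum_congr rfl this, Finset.sum_sub_distrib]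
  simp only [EE_zero]
  ring

lemma FF_eq_zero (s : Finset σ) : ∀ m : ℕ, FF s (m + 1) = 0 := by
  induction s using Finset.induction_on with
  | empty =>
    intro m
    rw [FF]
    apply Finset.sum_eq_zero
    intro p hp
    rw [Finset.HasAntidiagonal.mem_antidiagonal] at hp
    rcases Nat.eq_zero_or_pos p.1 with h1 | h1
    · have h2 : p.2 = m + 1 := by omega
      rw [h1, h2, HH_empty, mul_zero, mul_zero]
    · rw [EE_eq_zero (by simpa using h1), zero_mul, mul_zero]
  | @insert a s ha ih =>
    intro m
    rw [FF_insert_succ ha, GG_succ ha, ih m]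
    rcases m with - | m
    · simp [GG, FF, Finset.Nat.antidiagonal_zero]
    · rw [GG_succ ha, ih m]
      ring
    
/-- `SS k m = ∑ (-1)^p e'_p h_q` where `e'` omits the variable `k`. -/
noncomputable def SS (k : σ) (m : ℕ) : MvPolynomial σ ℚ :=
  ∑ p ∈ Finset.HasAntidiagonal.antidiagonal m, (-1) ^ p.1 * (EE (univ.erase k) p.1 * HH univ p.2)

lemma EE_univ_succ (k : σ) (j : ℕ) :
    EE (univ : Finset σ) (j + 1) = EE (univ.erase k) (j + 1) + X k * EE (univ.erase k) j := by
  conv_lhs => rw [← Finset.insert_erase (mem_univ k)]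
  exact EE_insert (notMem_erase k univ) j

lemma SS_succ (k : σ) (m : ℕ) : SS k (m + 1) = X k * SS k m := by
  have h0 := FF_eq_zero (univ : Finset σ) m
  rw [FF, Finset.Nat.sum_antidiagonal_succ] at h0
  have : ∀ p ∈ Finset.HasAntidiagonal.antidiagonal m,
      (-1:MvPolynomial σ ℚ) ^ (p.1 + 1) * (EE (univ : Finset σ) (p.1 + 1) * HH univ p.2) =
      (-1) ^ (p.1 + 1) * (EE (univ.erase k) (p.1 + 1) * HH univ p.2) -
        X k * ((-1) ^ p.1 * (EE (univ.erase k) p.1 * HH univ p.2)) := by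
    intro p _
    rw [EE_univ_succ k]
    ring
  rw [Finset.sum_congr rfl this, Finset.sum_sub_distrib] at h0
  rw [SS, Finset.Nat.sum_antidiagonal_succ, SS, mul_sum]
  simp only [EE_zero] at h0 ⊢
  linear_combination h0

lemma SS_eq (k : σ) (m : ℕ) : SS k m = X k ^ m := by
  induction m with
  | zero => simp [SS, Finset.Nat.antidiagonal_zero]
  | succ m ih => rw [SS_succ, ih, pow_succ]; ring

lemma hsymm_eq_HH (j : ℕ) : hsymm σ ℚ j = HH univ j := by
  rw [hsymm, HH]
  apply Finset.sum_congr
  · symm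
    apply Finset.eq_univ_iff_forall.2
    intro A
    exact mem_sym_iff.2 fun a _ => mem_univ a
  · intro A _; rfl

lemma esymm_eq_EE (j : ℕ) : esymm σ ℚ j = EE univ j := rfl

lemma pderiv_prod_X (k : σ) (t : Finset σ) :
    pderiv k (∏ i ∈ t, (X i : MvPolynomial σ ℚ)) =
      if k ∈ t then ∏ i ∈ t.erase k, X i else 0 := by
  induction t using Finset.induction_on with
  | empty => simp
  | @insert a t ha ih =>
    rw [Finset.prod_insert ha, pderiv_mul, ih]
    rcases eq_or_ne k a with rfl | hka
    · rw [pderiv_X_self, if_neg ha, if_pos (mem_insert_self k t), Finset.erase_insert ha]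
      ring
    · rw [pderiv_X_of_ne (fun h => hka h.symm)]
      by_cases hkt : k ∈ t
      · rw [if_pos hkt, if_pos (mem_insert_of_mem hkt), Finset.erase_insert_of_ne (Ne.symm hka),
          Finset.prod_insert (fun h => ha (Finset.mem_of_mem_erase h))]
        ring
      · rw [if_neg hkt, if_neg (by simp [hka, hkt])]
        ring

lemma pderiv_esymm (k : σ) (j : ℕ) :
    pderiv k (esymm σ ℚ (j + 1)) = EE (univ.erase k) j := by
  rw [esymm, map_sum]
  have huniv : (univ : Finset σ) = insert k (univ.erase k) :=
    (Finset.insert_erase (mem_univ k)).symm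
  rw [show (powersetCard (j+1) (univ : Finset σ)) =
      powersetCard (j+1) (insert k (univ.erase k)) by rw [← huniv]]
  rw [powersetCard_succ_insert (notMem_erase k univ), sum_union]
  · have h1 : ∑ T ∈ powersetCard (j+1) (univ.erase k),
        pderiv k (∏ i ∈ T, (X i : MvPolynomial σ ℚ)) = 0 := by
      apply Finset.sum_eq_zero
      intro T hT
      rw [pderiv_prod_X, if_neg (fun h => notMem_erase k univ ((mem_powersetCard.1 hT).1 h))]
    rw [h1, zero_add, sum_image]
    · rw [EE]
      apply Finset.sum_congr rfl
      intro T hT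
      have hkT : k ∉ T := fun h => notMem_erase k univ ((mem_powersetCard.1 hT).1 h)
      rw [pderiv_prod_X, if_pos (mem_insert_self k T), Finset.erase_insert hkT]
    · intro x hx y hy hxy
      have hxa : k ∉ x := fun h => notMem_erase k univ ((mem_powersetCard.1 hx).1 h)
      have hya : k ∉ y := fun h => notMem_erase k univ ((mem_powersetCard.1 hy).1 h)
      rw [← Finset.erase_insert hxa, ← Finset.erase_insert hya, hxy]
  · rw [Finset.disjoint_right]
    intro T hT hT'
    rw [mem_image] at hT
    obtain ⟨T', hT', rfl⟩ := hT
    exact notMem_erase k univ ((mem_powersetCard.1 hT').1 (mem_insert_self k T'))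

lemma EE_erase_expand (k : σ) (j : ℕ) :
    EE ((univ : Finset σ).erase k) j =
      ∑ p ∈ Finset.HasAntidiagonal.antidiagonal j, (-X k) ^ p.1 * EE univ p.2 := by
  induction j with
  | zero => simp [Finset.Nat.antidiagonal_zero]
  | succ j ih =>
    have h := EE_univ_succ k j
    rw [Finset.Nat.sum_antidiagonal_succ]
    have : ∀ p ∈ Finset.HasAntidiagonal.antidiagonal j,
        (-X k : MvPolynomial σ ℚ) ^ (p.1 + 1) * EE univ p.2 =
        -X k * ((-X k) ^ p.1 * EE univ p.2) := by
      intro p _; ring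
    rw [Finset.sum_congr rfl this, ← mul_sum, ← ih]
    simp only [pow_zero, one_mul]
    linear_combination -h

/-- Chain rule for `pderiv` through `aeval`. -/
lemma pderiv_aeval {τ : Type*} [Fintype τ] [DecidableEq τ]
    (f : τ → MvPolynomial σ ℚ) (k : σ) (p : MvPolynomial τ ℚ) :
    pderiv k (aeval f p) = ∑ j, aeval f (pderiv j p) * pderiv k (f j) := by
  induction p using MvPolynomial.induction_on with
  | C a => simp
  | add p q hp hq =>
    simp only [map_add, hp, hq, add_mul, ← Finset.sum_add_distrib]
  | mul_X p j hp =>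
    rw [map_mul, aeval_X, pderiv_mul, hp]
    have : ∀ i : τ, aeval f (pderiv i (p * X j)) * pderiv k (f i) =
        (aeval f (pderiv i p) * pderiv k (f i)) * f j +
          (if i = j then aeval f p * pderiv k (f j) else 0) := by
      intro i
      rw [pderiv_mul, map_add, map_mul, map_mul, aeval_X, add_mul]
      congr 1
      · ring
      · rcases eq_or_ne i j with rfl | hij
        · rw [if_pos rfl, pderiv_X_self, map_one, mul_one]
        · rw [if_neg hij, pderiv_X_of_ne (fun h => hij h.symm), map_zero, mul_zero, zero_mul]
    rw [Finset.sum_congr rfl (fun i _ => this i), Finset.sum_add_distrib, ← Finset.sum_mul,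
      Finset.sum_ite_eq' univ j (fun _ => aeval f p * pderiv k (f j)), if_pos (mem_univ j)]

end PderivAux

open PderivAux

/-- If `W ∈ ℚ[x₁,…,x_r]` satisfies `W(e₁,…,e_r) = (1/(n+1)) Σᵢ qᵢ^{n+1}` (such a `W` is
unique since the elementary symmetric polynomials are algebraically independent), then
for each `1 ≤ i ≤ r` the partial derivative satisfies
`(∂W/∂x_i)(e₁,…,e_r) = (-1)^n y_{n+1-i}`, where `y_j = (-1)^j h_j` is the signed
complete homogeneous symmetric polynomial.  Here the variable `x_{i+1}` (for `i : Fin r`)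
is the `(i+1)`-st variable, and we assume `r ≤ n`. -/
theorem pderiv_cohomology_potential (r n : ℕ) (hr : r ≤ n)
    (W : MvPolynomial (Fin r) ℚ)
    (hW : aeval (fun i : Fin r => esymm (Fin r) ℚ ((i : ℕ) + 1)) W =
      C (1 / ((n : ℚ) + 1)) * psum (Fin r) ℚ (n + 1)) (i : Fin r) :
    aeval (fun j : Fin r => esymm (Fin r) ℚ ((j : ℕ) + 1)) (pderiv i W) =
      (-1 : MvPolynomial (Fin r) ℚ) ^ n *
        ((-1 : MvPolynomial (Fin r) ℚ) ^ (n + 1 - ((i : ℕ) + 1)) *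
          hsymm (Fin r) ℚ (n + 1 - ((i : ℕ) + 1))) := by
  classical
  set e : Fin r → (MvPolynomial (Fin r) ℚ) := fun j : Fin r => esymm (Fin r) ℚ ((j : ℕ) + 1) with he
  set u : Fin r → (MvPolynomial (Fin r) ℚ) := fun j => aeval e (pderiv j W) with hu
  set v : Fin r → (MvPolynomial (Fin r) ℚ) := fun j =>
    (-1 : (MvPolynomial (Fin r) ℚ)) ^ n * ((-1 : (MvPolynomial (Fin r) ℚ)) ^ (n + 1 - ((j : ℕ) + 1)) *
      hsymm (Fin r) ℚ (n + 1 - ((j : ℕ) + 1))) with hv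
  -- the linear system satisfied by `u`
  have hsys_u : ∀ k : Fin r, ∑ j, u j * EE (univ.erase k) (j : ℕ) = X k ^ n := by
    intro k
    have h1 := congrArg (pderiv k) hW
    rw [pderiv_aeval e k W] at h1
    have h2 : ∀ j : Fin r, pderiv k (e j) = EE (univ.erase k) (j : ℕ) := fun j =>
      pderiv_esymm k (j : ℕ)
    have h3 : pderiv k (C (1 / ((n : ℚ) + 1)) * psum (Fin r) ℚ (n + 1)) = X k ^ n := by
      rw [pderiv_C_mul, psum, map_sum]
      have hterm : ∀ m : Fin r, pderiv k ((X m : MvPolynomial (Fin r) ℚ) ^ (n + 1)) =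
          if m = k then C ((n : ℚ) + 1) * X k ^ n else 0 := by
        intro m
        rw [pderiv_pow]
        rcases eq_or_ne m k with rfl | hml
        · rw [pderiv_X_self, mul_one, Nat.add_sub_cancel, if_pos rfl]
          rw [show ((n : ℚ) + 1) = ((n + 1 : ℕ) : ℚ) by push_cast; ring, map_natCast]
        · rw [pderiv_X_of_ne hml, mul_zero, if_neg hml]
      rw [Finset.sum_congr rfl fun m _ => hterm m,
        Finset.sum_ite_eq' univ k (fun _ => C ((n : ℚ) + 1) * X k ^ n), if_pos (mem_univ k),
        ← mul_assoc, ← C_mul, div_mul_cancel₀, C_1, one_mul]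
      positivity
    rw [h3] at h1
    rw [← h1]
    exact (Finset.sum_congr rfl fun j _ => by rw [h2 j]).symm
  -- the linear system satisfied by `v`
  have hr1 : 1 ≤ r := Nat.one_le_iff_ne_zero.2 (by rintro rfl; exact i.elim0)
  have hsys_v : ∀ k : Fin r, ∑ j, v j * EE (univ.erase k) (j : ℕ) = X k ^ n := by
    intro k
    have hS := SS_eq k n
    rw [SS, Finset.Nat.sum_antidiagonal_eq_sum_range_succ_mk] at hS
    have hcard : ((univ : Finset (Fin r)).erase k).card = r - 1 := by
      rw [Finset.card_erase_of_mem (mem_univ k), card_univ, Fintype.card_fin]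
    have step1 : (∑ j : Fin r, v j * EE (univ.erase k) (j : ℕ)) =
        ∑ j ∈ range r, ((-1 : (MvPolynomial (Fin r) ℚ)) ^ n * ((-1 : (MvPolynomial (Fin r) ℚ)) ^ (n + 1 - (j + 1)) *
          hsymm (Fin r) ℚ (n + 1 - (j + 1)))) * EE (univ.erase k) j :=
      Fin.sum_univ_eq_sum_range (fun j => ((-1 : (MvPolynomial (Fin r) ℚ)) ^ n * ((-1 : (MvPolynomial (Fin r) ℚ)) ^ (n + 1 - (j + 1)) *
          hsymm (Fin r) ℚ (n + 1 - (j + 1)))) * EE (univ.erase k) j) r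
    rw [step1, ← hS]
    rw [← Finset.sum_subset (Finset.range_subset_range.2 (by omega : r ≤ n + 1))]
    · apply Finset.sum_congr rfl
      intro j hj
      rw [Finset.mem_range] at hj
      have hjn : j ≤ n := by omega
      have hnj : n + 1 - (j + 1) = n - j := by omega
      have h2 : ((-1 : (MvPolynomial (Fin r) ℚ)) ^ (n - j)) * ((-1 : (MvPolynomial (Fin r) ℚ)) ^ (n - j)) = 1 := by
        rw [← pow_add, ← two_mul, pow_mul]
        norm_num
      have hsign : (-1 : (MvPolynomial (Fin r) ℚ)) ^ n * (-1 : (MvPolynomial (Fin r) ℚ)) ^ (n - j) = (-1 : (MvPolynomial (Fin r) ℚ)) ^ j := by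
        have h3 : (-1 : (MvPolynomial (Fin r) ℚ)) ^ n = (-1) ^ (n - j) * (-1) ^ j := by
          rw [← pow_add, Nat.sub_add_cancel hjn]
        rw [h3, mul_comm ((-1 : (MvPolynomial (Fin r) ℚ)) ^ (n - j)) ((-1 : (MvPolynomial (Fin r) ℚ)) ^ j), mul_assoc, h2, mul_one]
      rw [hnj, hsymm_eq_HH]
      calc (-1 : (MvPolynomial (Fin r) ℚ)) ^ n * ((-1 : (MvPolynomial (Fin r) ℚ)) ^ (n - j) * HH univ (n - j)) * EE (univ.erase k) j
          = ((-1 : (MvPolynomial (Fin r) ℚ)) ^ n * (-1 : (MvPolynomial (Fin r) ℚ)) ^ (n - j)) * (HH univ (n - j) * EE (univ.erase k) j) := by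
            ring
        _ = (-1 : (MvPolynomial (Fin r) ℚ)) ^ j * (EE (univ.erase k) j * HH univ (n - j)) := by rw [hsign]; ring
    · intro j hj hjr
      rw [Finset.mem_range] at hj
      rw [Finset.mem_range, not_lt] at hjr
      rw [EE_eq_zero (by omega : ((univ : Finset (Fin r)).erase k).card < j), zero_mul, mul_zero]
  -- the Jacobian matrix and its invertibility
  let A : Matrix (Fin r) (Fin r) (MvPolynomial (Fin r) ℚ) := Matrix.of fun k j => EE (univ.erase k) (j : ℕ)
  have hAuv : A.mulVec (u - v) = 0 := by
    funext k
    simp only [Matrix.mulVec, dotProduct, Pi.sub_apply, Pi.zero_apply, Matrix.of_apply, A]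
    have : ∀ j : Fin r, EE (univ.erase k) (j : ℕ) * (u j - v j) =
        u j * EE (univ.erase k) (j : ℕ) - v j * EE (univ.erase k) (j : ℕ) := by
      intro j; ring
    rw [Finset.sum_congr rfl fun j _ => this j, Finset.sum_sub_distrib, hsys_u k, hsys_v k,
      sub_self]
  let T : Matrix (Fin r) (Fin r) (MvPolynomial (Fin r) ℚ) :=
    Matrix.of fun s j : Fin r => if (s : ℕ) ≤ (j : ℕ) then EE univ ((j : ℕ) - (s : ℕ)) else 0
  have hA : A = Matrix.vandermonde (fun k : Fin r => -X k) * T := by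
    funext k j
    rw [Matrix.mul_apply]
    simp only [Matrix.vandermonde_apply, Matrix.of_apply, A, T]
    rw [EE_erase_expand k (j : ℕ), Finset.Nat.sum_antidiagonal_eq_sum_range_succ_mk]
    rw [Fin.sum_univ_eq_sum_range
      (fun s => (-X k : (MvPolynomial (Fin r) ℚ)) ^ s * if s ≤ (j : ℕ) then EE univ ((j : ℕ) - s) else 0) r]
    rw [← Finset.sum_subset (Finset.range_subset_range.2 (by omega : (j : ℕ) + 1 ≤ r))]
    · apply Finset.sum_congr rfl
      intro s hs
      rw [Finset.mem_range] at hs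
      rw [if_pos (by omega : s ≤ (j : ℕ))]
    · intro s hs hs'
      rw [Finset.mem_range] at hs
      rw [Finset.mem_range, not_lt] at hs'
      rw [if_neg (by omega), mul_zero]
  have hdet : A.det ≠ 0 := by
    rw [hA, Matrix.det_mul]
    have h1 : (Matrix.vandermonde fun k : Fin r => (-X k : (MvPolynomial (Fin r) ℚ))).det ≠ 0 := by
      rw [Matrix.det_vandermonde_ne_zero_iff]
      intro a b hab
      exact X_injective (neg_injective hab)
    have h2 : T.det = 1 := by
      rw [Matrix.det_of_upperTriangular]
      · apply Finset.prod_eq_one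
        intro s _
        simp [T]
      · intro a b hba
        simp only [Matrix.of_apply, T]
        rw [if_neg (by exact_mod_cast not_le.2 hba)]
    rw [h2, mul_one]
    exact h1
  have hzero : u - v = 0 := by
    have h4 : A.det • (u - v) = 0 := by
      have h5 := congrArg (fun w => (A.adjugate).mulVec w) hAuv
      simpa [Matrix.mulVec_mulVec, Matrix.adjugate_mul, Matrix.smul_mulVec,
        Matrix.one_mulVec] using h5
    funext j
    have h6 := congrFun h4 j
    simp only [Pi.smul_apply, Pi.zero_apply, smul_eq_mul] at h6
    rcases mul_eq_zero.1 h6 with h | h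
    · exact absurd h hdet
    · exact h
  have huv : u = v := sub_eq_zero.1 hzero
  exact congrFun huv i
end

section
/- For k ≥ 2 and n ≥ 1, the numbers L_n = n · Σ over tuples (m₁,…,m_k) of nonnegative integers with m₁ + 2m₂ + ⋯ + k·m_k = n of (m₁+⋯+m_k-1)!/(m₁!⋯m_k!) satisfy the k-th order Lucas recursion L_n = L_{n-1} + L_{n-2} + ⋯ + L_{n-k} for n > k. -/
open Finset

/-- `waringLucas k n = n · Σ (m₁+⋯+m_k-1)!/(m₁!⋯m_k!)`, summed over all tuples of
nonnegative integers with `m₁ + 2m₂ + ⋯ + k·m_k = n`; this is the paper's `L_n`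
(each summand times `n` is an integer, but we work in `ℚ`). -/
def waringLucas (k n : ℕ) : ℚ :=
  (n : ℚ) * ∑ m ∈ Finset.univ.filter
      (fun m : Fin k → Fin (n + 1) => ∑ j : Fin k, ((j : ℕ) + 1) * (m j : ℕ) = n),
    (Nat.factorial ((∑ j : Fin k, (m j : ℕ)) - 1) : ℚ) /
      ∏ j : Fin k, (Nat.factorial (m j) : ℚ)

/-- The set of ℕ-valued tuples with `Σ (j+1)·m j = n`. -/
def wA (k n : ℕ) : Finset (Fin k → ℕ) :=
  (Fintype.piFinset fun _ => Finset.range (n+1)).filter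
    (fun m => ∑ j : Fin k, ((j : ℕ) + 1) * m j = n)

lemma mem_wA {k n : ℕ} {m : Fin k → ℕ} :
    m ∈ wA k n ↔ ∑ j : Fin k, ((j : ℕ) + 1) * m j = n := by
  constructor
  · intro h; exact (Finset.mem_filter.1 h).2
  · intro h
    refine Finset.mem_filter.2 ⟨Fintype.mem_piFinset.2 fun i => ?_, h⟩
    rw [Finset.mem_range]
    have h1 : ((i : ℕ) + 1) * m i ≤ n :=
      h ▸ Finset.single_le_sum (f := fun j : Fin k => ((j : ℕ) + 1) * m j)
        (fun _ _ => Nat.zero_le _) (Finset.mem_univ i)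
    have h2 : m i ≤ ((i : ℕ) + 1) * m i := Nat.le_mul_of_pos_left _ (Nat.succ_pos _)
    omega

/-- The summand as a function of an ℕ-valued tuple. -/
def wF (k : ℕ) (m : Fin k → ℕ) : ℚ :=
  (Nat.factorial ((∑ j : Fin k, m j) - 1) : ℚ) / ∏ j : Fin k, (Nat.factorial (m j) : ℚ)

lemma waringLucas_eq (k n : ℕ) :
    waringLucas k n = (n : ℚ) * ∑ m ∈ wA k n, wF k m := by
  unfold waringLucas wF
  congr 1
  apply Finset.sum_bij (fun (m : Fin k → Fin (n+1)) _ => fun i => (m i : ℕ))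
  · intro m hm
    exact mem_wA.2 (Finset.mem_filter.1 hm).2
  · intro a _ b _ h
    funext i
    exact Fin.val_injective (congrFun h i)
  · intro m hm
    have hp := Fintype.mem_piFinset.1 (Finset.mem_filter.1 hm).1
    refine ⟨fun i => ⟨m i, Finset.mem_range.1 (hp i)⟩, ?_, rfl⟩
    refine Finset.mem_filter.2 ⟨Finset.mem_univ _, ?_⟩
    exact mem_wA.1 hm
  · intro m _
    rfl

lemma wA_step (k n : ℕ) (hn : k < n) (j : Fin k) :
    ∑ m ∈ wA k (n - 1 - (j : ℕ)), wF k m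
      = ∑ m ∈ (wA k n).filter (fun m => 1 ≤ m j),
          (m j : ℚ) * (Nat.factorial ((∑ i : Fin k, m i) - 2) : ℚ) /
            ∏ i : Fin k, (Nat.factorial (m i) : ℚ) := by
  have hjn : (j : ℕ) + 1 ≤ n := by have := j.isLt; omega
  have hdelta : ∀ (jj : Fin k), ∑ i : Fin k, ((i : ℕ) + 1) * (if i = jj then 1 else 0)
      = (jj : ℕ) + 1 := by
    intro jj
    simp [mul_ite]
  apply Finset.sum_bij (fun (m : Fin k → ℕ) _ => fun i => m i + if i = j then 1 else 0)
  · intro m hm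
    have hs := mem_wA.1 hm
    refine Finset.mem_filter.2 ⟨mem_wA.2 ?_, by simp⟩
    rw [show (fun (i : Fin k) => ((i : ℕ) + 1) * (m i + if i = j then 1 else 0))
        = fun (i : Fin k) => ((i : ℕ) + 1) * m i + ((i : ℕ) + 1) * (if i = j then 1 else 0) from
        funext fun i => by ring,
      Finset.sum_add_distrib, hs, hdelta]
    omega
  · intro a _ b _ h
    funext i
    have := congrFun h i
    omega
  · intro m hm
    have h1 : 1 ≤ m j := (Finset.mem_filter.1 hm).2
    have hs := mem_wA.1 (Finset.mem_filter.1 hm).1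
    refine ⟨fun i => m i - if i = j then 1 else 0, ?_, ?_⟩
    · have heq : (fun i => (m i - if i = j then 1 else 0) + if i = j then 1 else 0) = m := by
        funext i
        by_cases hij : i = j <;> simp [hij] <;> omega
      refine mem_wA.2 ?_
      have hcong := congrArg
        (fun f : Fin k → ℕ => ∑ i : Fin k, ((i : ℕ) + 1) * f i) heq
      rw [hs] at hcong
      rw [show (fun (i : Fin k) => ((i : ℕ) + 1) * ((m i - if i = j then 1 else 0)
          + if i = j then 1 else 0))
          = fun (i : Fin k) => ((i : ℕ) + 1) * (m i - if i = j then 1 else 0)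
            + ((i : ℕ) + 1) * (if i = j then 1 else 0) from funext fun i => by ring,
        Finset.sum_add_distrib, hdelta] at hcong
      omega
    · funext i
      by_cases hij : i = j <;> simp [hij] <;> omega
  · intro m hm
    unfold wF
    have hsum : ∑ i : Fin k, (m i + if i = j then 1 else 0) = (∑ i : Fin k, m i) + 1 := by
      rw [Finset.sum_add_distrib]
      simp
    have hred : ((∑ i : Fin k, m i) + 1) - 2 = (∑ i : Fin k, m i) - 1 := by omega
    have hval : (fun i => m i + if i = j then 1 else 0) j = m j + 1 := by simp
    have hprod : ∏ i : Fin k, (Nat.factorial (m i + if i = j then 1 else 0) : ℚ)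
        = ((m j : ℚ) + 1) * ∏ i : Fin k, (Nat.factorial (m i) : ℚ) := by
      rw [← Finset.mul_prod_erase Finset.univ
          (fun i => (Nat.factorial (m i + if i = j then 1 else 0) : ℚ)) (Finset.mem_univ j),
        ← Finset.mul_prod_erase Finset.univ
          (fun i => (Nat.factorial (m i) : ℚ)) (Finset.mem_univ j)]
      have : ∏ i ∈ Finset.univ.erase j, (Nat.factorial (m i + if i = j then 1 else 0) : ℚ)
          = ∏ i ∈ Finset.univ.erase j, (Nat.factorial (m i) : ℚ) := by
        apply Finset.prod_congr rfl
        intro i hi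
        simp [(Finset.mem_erase.1 hi).1]
      rw [this, if_pos rfl, Nat.factorial_succ]
      push_cast
      ring
    rw [hsum, hred, hval, hprod]
    have hfne : (∏ i : Fin k, (Nat.factorial (m i) : ℚ)) ≠ 0 := by
      apply Finset.prod_ne_zero_iff.2
      intro i _
      exact_mod_cast (Nat.factorial_ne_zero (m i))
    have hmj : ((m j : ℚ) + 1) ≠ 0 := by positivity
    field_simp
    push_cast
    ring

lemma wA_s_ge_two (k n : ℕ) (hk : 2 ≤ k) (hn : k < n) {m : Fin k → ℕ}
    (hm : m ∈ wA k n) : 2 ≤ ∑ i : Fin k, m i := by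
  have hs := mem_wA.1 hm
  have hle : n ≤ k * ∑ i : Fin k, m i := by
    rw [Finset.mul_sum, ← hs]
    apply Finset.sum_le_sum
    intro i _
    exact Nat.mul_le_mul_right _ (by have := i.isLt; omega)
  by_contra h
  push_neg at h
  have : k * ∑ i : Fin k, m i ≤ k * 1 := Nat.mul_le_mul_left _ (by omega)
  omega

/-- For `k ≥ 2`, the numbers `L_n = waringLucas k n` satisfy the `k`-th order Lucas
recursion `L_n = L_{n-1} + L_{n-2} + ⋯ + L_{n-k}` for `n > k`. -/
theorem waringLucas_recursion (k : ℕ) (hk : 2 ≤ k) :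
    ∀ n, k < n → waringLucas k n = ∑ j ∈ Finset.range k, waringLucas k (n - 1 - j) := by
  intro n hn
  rw [waringLucas_eq, ← Fin.sum_univ_eq_sum_range (fun j => waringLucas k (n - 1 - j)) k]
  have hstep : ∀ j : Fin k, waringLucas k (n - 1 - (j : ℕ))
      = ((n : ℚ) - 1 - (j : ℕ)) * ∑ m ∈ wA k n,
          (m j : ℚ) * (Nat.factorial ((∑ i : Fin k, m i) - 2) : ℚ) /
            ∏ i : Fin k, (Nat.factorial (m i) : ℚ) := by
    intro j
    rw [waringLucas_eq, wA_step k n hn j]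
    have hjn : (j : ℕ) + 1 ≤ n := by have := j.isLt; omega
    have hcast : ((n - 1 - (j : ℕ) : ℕ) : ℚ) = (n : ℚ) - 1 - (j : ℕ) := by
      have h1 : (n - 1 - (j : ℕ)) + ((j : ℕ) + 1) = n := by omega
      have := congrArg (fun x : ℕ => (x : ℚ)) h1
      push_cast at this
      linarith
    rw [hcast]
    congr 1
    rw [Finset.sum_filter_of_ne]
    intro m _ hne
    by_contra h
    push_neg at h
    have : m j = 0 := by omega
    rw [this] at hne
    simp at hne
  rw [Finset.sum_congr rfl fun j _ => hstep j]
  rw [show (∑ j : Fin k, ((n : ℚ) - 1 - (j : ℕ)) * ∑ m ∈ wA k n,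
        (m j : ℚ) * (Nat.factorial ((∑ i : Fin k, m i) - 2) : ℚ) /
          ∏ i : Fin k, (Nat.factorial (m i) : ℚ))
      = ∑ m ∈ wA k n, ∑ j : Fin k, ((n : ℚ) - 1 - (j : ℕ)) *
        ((m j : ℚ) * (Nat.factorial ((∑ i : Fin k, m i) - 2) : ℚ) /
          ∏ i : Fin k, (Nat.factorial (m i) : ℚ)) from by
      rw [Finset.sum_comm]
      exact Finset.sum_congr rfl fun j _ => Finset.mul_sum _ _ _]
  rw [Finset.mul_sum]
  apply Finset.sum_congr rfl
  intro m hm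
  have hs := mem_wA.1 hm
  have hs2 := wA_s_ge_two k n hk hn hm
  set s : ℕ := ∑ i : Fin k, m i with hsdef
  have hfne : (∏ i : Fin k, (Nat.factorial (m i) : ℚ)) ≠ 0 := by
    apply Finset.prod_ne_zero_iff.2
    intro i _
    exact_mod_cast (Nat.factorial_ne_zero (m i))
  have hfact : ((s - 1).factorial : ℚ) = ((s : ℚ) - 1) * ((s - 2).factorial : ℚ) := by
    have h1 : s - 1 = (s - 2) + 1 := by omega
    have h2 : ((s - 1 : ℕ) : ℚ) = (s : ℚ) - 1 := by
      have : ((s - 1 : ℕ) : ℚ) + 1 = (s : ℚ) := by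
        have h3 : (s - 1) + 1 = s := by omega
        exact_mod_cast congrArg (fun x : ℕ => (x : ℚ)) h3
      linarith
    rw [h1, Nat.factorial_succ]
    push_cast
    rw [show ((s - 2 : ℕ) : ℚ) + 1 = ((s - 1 : ℕ) : ℚ) from by
      have h4 : (s - 2) + 1 = s - 1 := by omega
      exact_mod_cast congrArg (fun x : ℕ => (x : ℚ)) h4]
    rw [h2]
  have hsQ : ∑ j : Fin k, (((j : ℕ) : ℚ) + 1) * (m j : ℚ) = (n : ℚ) := by
    exact_mod_cast congrArg (fun x : ℕ => (x : ℚ)) hs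
  have hsQ2 : ∑ j : Fin k, (m j : ℚ) = (s : ℚ) := by
    exact_mod_cast rfl
  have hkey : ∑ j : Fin k, ((n : ℚ) - 1 - (j : ℕ)) * (m j : ℚ)
      = (n : ℚ) * (s : ℚ) - (n : ℚ) := by
    have : ∀ j : Fin k, ((n : ℚ) - 1 - (j : ℕ)) * (m j : ℚ)
        = (n : ℚ) * (m j : ℚ) - (((j : ℕ) : ℚ) + 1) * (m j : ℚ) := fun j => by ring
    rw [Finset.sum_congr rfl fun j _ => this j, Finset.sum_sub_distrib,
      ← Finset.mul_sum, hsQ2, hsQ]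
  unfold wF
  rw [hfact]
  calc (n : ℚ) * (((s : ℚ) - 1) * ((s - 2).factorial : ℚ) /
        ∏ i : Fin k, (Nat.factorial (m i) : ℚ))
      = ((n : ℚ) * (s : ℚ) - (n : ℚ)) * (((s - 2).factorial : ℚ) /
          ∏ i : Fin k, (Nat.factorial (m i) : ℚ)) := by ring
    _ = (∑ j : Fin k, ((n : ℚ) - 1 - (j : ℕ)) * (m j : ℚ)) * (((s - 2).factorial : ℚ) /
          ∏ i : Fin k, (Nat.factorial (m i) : ℚ)) := by rw [hkey]
    _ = ∑ j : Fin k, ((n : ℚ) - 1 - (j : ℕ)) *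
          ((m j : ℚ) * ((s - 2).factorial : ℚ) /
            ∏ i : Fin k, (Nat.factorial (m i) : ℚ)) := by
        rw [Finset.sum_mul]
        exact Finset.sum_congr rfl fun j _ => by ring
end

section
/- The third-order Lucas numbers given by L_n = n·Σ_{m₁+2m₂+3m₃=n} (m₁+m₂+m₃-1)!/(m₁!m₂!m₃!) have initial values L₁,…,L₈ = 1, 3, 7, 11, 21, 39, 71, 131, and satisfy L_n = L_{n-1} + L_{n-2} + L_{n-3} for n ≥ 4. -/
open Finset

/-- `tribLucas n = n · Σ_{m₁+2m₂+3m₃=n} (m₁+m₂+m₃-1)!/(m₁!m₂!m₃!)`; this is the paper's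
third-order Lucas number `L_n`. -/
def tribLucas (n : ℕ) : ℚ :=
  (n : ℚ) * ∑ m ∈ Finset.univ.filter
      (fun m : Fin 3 → Fin (n + 1) => ∑ j : Fin 3, ((j : ℕ) + 1) * (m j : ℕ) = n),
    (Nat.factorial ((∑ j : Fin 3, (m j : ℕ)) - 1) : ℚ) /
      ∏ j : Fin 3, (Nat.factorial (m j) : ℚ)

section Aux
open Nat

def S (n : ℕ) : Finset (ℕ × ℕ × ℕ) :=
  ((range (n+1)) ×ˢ (range (n+1)) ×ˢ (range (n+1))).filter
    (fun p => p.1 + 2 * p.2.1 + 3 * p.2.2 = n)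

lemma mem_S {n : ℕ} {p : ℕ × ℕ × ℕ} : p ∈ S n ↔ p.1 + 2 * p.2.1 + 3 * p.2.2 = n := by
  simp only [S, Finset.mem_filter, Finset.mem_product, Finset.mem_range]
  omega

def Fq (p : ℕ × ℕ × ℕ) : ℚ :=
  (Nat.factorial (p.1 + p.2.1 + p.2.2) : ℚ) /
    ((Nat.factorial p.1 : ℚ) * (Nat.factorial p.2.1 : ℚ) * (Nat.factorial p.2.2 : ℚ))

def Gq (p : ℕ × ℕ × ℕ) : ℚ :=
  (Nat.factorial (p.1 + p.2.1 + p.2.2 - 1) : ℚ) /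
    ((Nat.factorial p.1 : ℚ) * (Nat.factorial p.2.1 : ℚ) * (Nat.factorial p.2.2 : ℚ))

def Tq (n : ℕ) : ℚ := ∑ p ∈ S n, Fq p

lemma fact_ne (a : ℕ) : (Nat.factorial a : ℚ) ≠ 0 :=
  Nat.cast_ne_zero.2 (Nat.factorial_ne_zero a)

lemma key1 (a b c : ℕ) : ((a+1 : ℕ) : ℚ) * Gq (a+1, b, c) = Fq (a, b, c) := by
  unfold Gq Fq
  simp only
  rw [show a + 1 + b + c - 1 = a + b + c by omega, Nat.factorial_succ]
  have h1 := fact_ne a; have h2 := fact_ne b; have h3 := fact_ne c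
  push_cast
  field_simp

lemma key2 (a b c : ℕ) : ((b+1 : ℕ) : ℚ) * Gq (a, b+1, c) = Fq (a, b, c) := by
  unfold Gq Fq
  simp only
  rw [show a + (b + 1) + c - 1 = a + b + c by omega, Nat.factorial_succ]
  have h1 := fact_ne a; have h2 := fact_ne b; have h3 := fact_ne c
  push_cast
  field_simp

lemma key3 (a b c : ℕ) : ((c+1 : ℕ) : ℚ) * Gq (a, b, c+1) = Fq (a, b, c) := by
  unfold Gq Fq
  simp only
  rw [show a + b + (c + 1) - 1 = a + b + c by omega, Nat.factorial_succ]
  have h1 := fact_ne a; have h2 := fact_ne b; have h3 := fact_ne c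
  push_cast
  field_simp

lemma keyF (a b c : ℕ) (h : a + b + c ≠ 0) :
    Fq (a, b, c) = ((a + b + c : ℕ) : ℚ) * Gq (a, b, c) := by
  obtain ⟨k, hk⟩ := Nat.exists_eq_succ_of_ne_zero h
  unfold Gq Fq
  simp only
  rw [hk, Nat.succ_sub_one, Nat.factorial_succ]
  push_cast
  ring

lemma bij1 (m : ℕ) : ∑ p ∈ S (m+1), (p.1 : ℚ) * Gq p = Tq m := by
  rw [← Finset.sum_filter_of_ne (p := fun p => p.1 ≠ 0)
    (by intro p _ h hp0; exact h (by rw [hp0]; push_cast; ring))]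
  refine Finset.sum_nbij' (i := fun p => (p.1 - 1, p.2.1, p.2.2))
    (j := fun p => (p.1 + 1, p.2.1, p.2.2)) ?_ ?_ ?_ ?_ ?_
  · intro p hp
    simp only [Finset.mem_filter, mem_S] at hp ⊢
    omega
  · intro p hp
    rw [mem_S] at hp
    simp only [Finset.mem_filter, mem_S]
    omega
  · intro p hp
    simp only [Finset.mem_filter] at hp
    obtain ⟨a, b, c⟩ := p
    simp only at hp ⊢
    have : a - 1 + 1 = a := by omega
    simp [this]
  · intro p hp
    simp
  · intro p hp
    simp only [Finset.mem_filter] at hp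
    obtain ⟨a, b, c⟩ := p
    obtain ⟨a, rfl⟩ := Nat.exists_eq_succ_of_ne_zero hp.2
    simpa using key1 a b c

lemma bij2 (m : ℕ) : ∑ p ∈ S (m+2), (p.2.1 : ℚ) * Gq p = Tq m := by
  rw [← Finset.sum_filter_of_ne (p := fun p => p.2.1 ≠ 0)
    (by intro p _ h hp0; exact h (by rw [hp0]; push_cast; ring))]
  refine Finset.sum_nbij' (i := fun p => (p.1, p.2.1 - 1, p.2.2))
    (j := fun p => (p.1, p.2.1 + 1, p.2.2)) ?_ ?_ ?_ ?_ ?_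
  · intro p hp
    simp only [Finset.mem_filter, mem_S] at hp ⊢
    omega
  · intro p hp
    rw [mem_S] at hp
    simp only [Finset.mem_filter, mem_S]
    omega
  · intro p hp
    simp only [Finset.mem_filter] at hp
    obtain ⟨a, b, c⟩ := p
    simp only at hp ⊢
    have : b - 1 + 1 = b := by omega
    simp [this]
  · intro p hp
    simp
  · intro p hp
    simp only [Finset.mem_filter] at hp
    obtain ⟨a, b, c⟩ := p
    obtain ⟨b, rfl⟩ := Nat.exists_eq_succ_of_ne_zero hp.2
    simpa using key2 a b c

lemma bij3 (m : ℕ) : ∑ p ∈ S (m+3), (p.2.2 : ℚ) * Gq p = Tq m := by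
  rw [← Finset.sum_filter_of_ne (p := fun p => p.2.2 ≠ 0)
    (by intro p _ h hp0; exact h (by rw [hp0]; push_cast; ring))]
  refine Finset.sum_nbij' (i := fun p => (p.1, p.2.1, p.2.2 - 1))
    (j := fun p => (p.1, p.2.1, p.2.2 + 1)) ?_ ?_ ?_ ?_ ?_
  · intro p hp
    simp only [Finset.mem_filter, mem_S] at hp ⊢
    omega
  · intro p hp
    rw [mem_S] at hp
    simp only [Finset.mem_filter, mem_S]
    omega
  · intro p hp
    simp only [Finset.mem_filter] at hp
    obtain ⟨a, b, c⟩ := p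
    simp only at hp ⊢
    have : c - 1 + 1 = c := by omega
    simp [this]
  · intro p hp
    simp
  · intro p hp
    simp only [Finset.mem_filter] at hp
    obtain ⟨a, b, c⟩ := p
    obtain ⟨c, rfl⟩ := Nat.exists_eq_succ_of_ne_zero hp.2
    simpa using key3 a b c

lemma T_rec (m : ℕ) : Tq (m+3) = Tq (m+2) + Tq (m+1) + Tq m := by
  have h : ∀ p ∈ S (m+3),
      Fq p = (p.1 : ℚ) * Gq p + (p.2.1 : ℚ) * Gq p + (p.2.2 : ℚ) * Gq p := by
    intro p hp
    rw [mem_S] at hp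
    obtain ⟨a, b, c⟩ := p
    simp only at hp ⊢
    rw [keyF a b c (by omega)]
    push_cast
    ring
  rw [Tq, Finset.sum_congr rfl h, Finset.sum_add_distrib, Finset.sum_add_distrib,
    show m + 3 = (m + 2) + 1 from rfl, bij1]
  rw [show m + 2 + 1 = (m + 1) + 2 from rfl, bij2]
  rw [show m + 1 + 2 = m + 3 from rfl, bij3]

lemma L_eq (n : ℕ) : tribLucas n = (n : ℚ) * ∑ p ∈ S n, Gq p := by
  unfold tribLucas
  congr 1
  have hmin : ∀ k : Fin (n+1), min (k : ℕ) n = (k : ℕ) :=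
    fun k => Nat.min_eq_left (Nat.lt_succ_iff.mp k.isLt)
  refine Finset.sum_nbij' (i := fun m => ((m 0 : ℕ), (m 1 : ℕ), (m 2 : ℕ)))
    (j := fun p => ![⟨min p.1 n, Nat.lt_succ_of_le (Nat.min_le_right _ _)⟩,
                     ⟨min p.2.1 n, Nat.lt_succ_of_le (Nat.min_le_right _ _)⟩,
                     ⟨min p.2.2 n, Nat.lt_succ_of_le (Nat.min_le_right _ _)⟩]) ?_ ?_ ?_ ?_ ?_
  · intro m hm
    simp only [Finset.mem_filter, Finset.mem_univ, true_and, Fin.sum_univ_three] at hm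
    rw [mem_S]
    simp only
    omega
  · intro p hp
    rw [mem_S] at hp
    simp only [Finset.mem_filter, Finset.mem_univ, true_and, Fin.sum_univ_three]
    simp only [Matrix.cons_val_zero, Matrix.cons_val_one, Matrix.head_cons,
      Matrix.cons_val_two, Matrix.tail_cons]
    omega
  · intro m hm
    funext k
    fin_cases k <;>
      simp [Fin.ext_iff, hmin]
  · intro p hp
    rw [mem_S] at hp
    obtain ⟨a, b, c⟩ := p
    simp only at hp
    simp only [Matrix.cons_val_zero, Matrix.cons_val_one, Matrix.head_cons,
      Matrix.cons_val_two, Matrix.tail_cons]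
    refine Prod.ext ?_ (Prod.ext ?_ ?_) <;> simp <;> omega
  · intro m hm
    simp only [Gq, Fin.sum_univ_three, Fin.prod_univ_three]

lemma L_formula (m : ℕ) : tribLucas (m+3) = Tq (m+2) + 2 * Tq (m+1) + 3 * Tq m := by
  rw [L_eq, Finset.mul_sum]
  have h : ∀ p ∈ S (m+3),
      ((m+3 : ℕ) : ℚ) * Gq p =
        (p.1 : ℚ) * Gq p + 2 * ((p.2.1 : ℚ) * Gq p) + 3 * ((p.2.2 : ℚ) * Gq p) := by
    intro p hp
    rw [mem_S] at hp
    obtain ⟨a, b, c⟩ := p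
    simp only at hp ⊢
    rw [← hp]
    push_cast
    ring
  rw [Finset.sum_congr rfl h, Finset.sum_add_distrib, Finset.sum_add_distrib,
    ← Finset.mul_sum, ← Finset.mul_sum,
    show m + 3 = (m + 2) + 1 from rfl, bij1,
    show m + 2 + 1 = (m + 1) + 2 from rfl, bij2,
    show m + 1 + 2 = m + 3 from rfl, bij3]

lemma hS0 : S 0 = {(0,0,0)} := by decide
lemma hS1 : S 1 = {(1,0,0)} := by decide
lemma hS2 : S 2 = {(0,1,0),(2,0,0)} := by decide

lemma Tq0 : Tq 0 = 1 := by simp [Tq, hS0, Fq]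
lemma Tq1 : Tq 1 = 1 := by simp [Tq, hS1, Fq]
lemma Tq2 : Tq 2 = 2 := by
  rw [Tq, hS2]
  norm_num [Fq, Nat.factorial]

lemma L1 : tribLucas 1 = 1 := by
  rw [L_eq, hS1]
  norm_num [Gq, Nat.factorial]

lemma L2 : tribLucas 2 = 3 := by
  rw [L_eq, hS2]
  norm_num [Gq, Nat.factorial]

lemma Tq3 : Tq 3 = 4 := by rw [show (3:ℕ) = 0 + 3 from rfl, T_rec]; rw [Tq0, Tq1, Tq2]; norm_num
lemma Tq4 : Tq 4 = 7 := by rw [show (4:ℕ) = 1 + 3 from rfl, T_rec]; rw [Tq1, Tq2, Tq3]; norm_num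
lemma Tq5 : Tq 5 = 13 := by rw [show (5:ℕ) = 2 + 3 from rfl, T_rec]; rw [Tq2, Tq3, Tq4]; norm_num

lemma L3 : tribLucas 3 = 7 := by
  rw [show (3:ℕ) = 0 + 3 from rfl, L_formula, Tq0, Tq1, Tq2]; norm_num
lemma L4 : tribLucas 4 = 11 := by
  rw [show (4:ℕ) = 1 + 3 from rfl, L_formula, Tq1, Tq2, Tq3]; norm_num
lemma L5 : tribLucas 5 = 21 := by
  rw [show (5:ℕ) = 2 + 3 from rfl, L_formula, Tq2, Tq3, Tq4]; norm_num
lemma L6 : tribLucas 6 = 39 := by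
  rw [show (6:ℕ) = 3 + 3 from rfl, L_formula, Tq3, Tq4, Tq5]; norm_num
lemma L7 : tribLucas 7 = 71 := by
  rw [show (7:ℕ) = 4 + 3 from rfl, L_formula, Tq4, Tq5]
  rw [show (4+2:ℕ) = 3 + 3 from rfl, T_rec, Tq3, Tq4, Tq5]; norm_num
lemma L8 : tribLucas 8 = 131 := by
  rw [show (8:ℕ) = 5 + 3 from rfl, L_formula]
  rw [show (5+2:ℕ) = 4 + 3 from rfl, T_rec, show (5+1:ℕ) = 3 + 3 from rfl, T_rec,
    Tq3, Tq4, Tq5]; norm_num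

end Aux

/-- The third-order Lucas numbers `L_n = tribLucas n` have initial values
`L₁,…,L₈ = 1, 3, 7, 11, 21, 39, 71, 131` and satisfy
`L_n = L_{n-1} + L_{n-2} + L_{n-3}` for `n ≥ 4`. -/
theorem tribLucas_values :
    (tribLucas 1 = 1 ∧ tribLucas 2 = 3 ∧ tribLucas 3 = 7 ∧ tribLucas 4 = 11 ∧
      tribLucas 5 = 21 ∧ tribLucas 6 = 39 ∧ tribLucas 7 = 71 ∧ tribLucas 8 = 131)
    ∧ ∀ n, 4 ≤ n → tribLucas n = tribLucas (n - 1) + tribLucas (n - 2) + tribLucas (n - 3) := by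
  refine ⟨⟨L1, L2, L3, L4, L5, L6, L7, L8⟩, ?_⟩
  intro n hn
  obtain ⟨m, rfl⟩ : ∃ m, n = m + 4 := ⟨n - 4, by omega⟩
  match m with
  | 0 => norm_num [L1, L2, L3, L4]
  | 1 => norm_num [L2, L3, L4, L5]
  | (k+2) =>
    show tribLucas (k+6) = tribLucas (k+6-1) + tribLucas (k+6-2) + tribLucas (k+6-3)
    rw [show k+6-1 = k+5 from rfl, show k+6-2 = k+4 from rfl, show k+6-3 = k+3 from rfl,
      show k+6 = (k+3)+3 from rfl, L_formula,
      show k+5 = (k+2)+3 from rfl, L_formula,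
      show k+4 = (k+1)+3 from rfl, L_formula,
      show k+3 = k+3 from rfl, L_formula,
      show (k+3)+2 = (k+2)+3 from rfl, T_rec,
      show (k+2)+2 = (k+1)+3 from rfl, T_rec,
      show (k+1)+2 = k+3 from rfl, T_rec]
    ring
end
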